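/- Let (Z_k)_{k≥0} be a Galton–Watson process with offspring distribution D satisfying μ = E[D] > 1 and E[e^{aD}] < ∞ for some a > 0, Z_0 = 1, and let W_k = μ^{−k} Z_k. If W = lim_k W_k (which exists a.s. by the martingale convergence theorem), then there exists a_* > 0 such that E[e^{a_* W}] < ∞. -/

import Mathlib

open MeasureTheory ProbabilityTheory Filter

open scoped ENNReal NNReal

lemma gw_sq_le_exp {t : ℝ} (ht : 0 ≤ t) : t ^ 2 ≤ 4 * Real.exp t := by
  have h1 : t / 2 + 1 ≤ Real.exp (t / 2) := Real.add_one_le_exp _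
  have h2 : Real.exp (t / 2) * Real.exp (t / 2) = Real.exp t := by
    rw [← Real.exp_add]; ring_nf
  nlinarith [Real.exp_pos (t / 2), sq_nonneg t]

lemma gw_exp_pointwise {a s x : ℝ} (ha : 0 < a) (hx : 0 ≤ x) (hs : 0 ≤ s) (hsa : s ≤ a / 2) :
    Real.exp (s * x) ≤ 1 + s * x + 16 / a ^ 2 * s ^ 2 * Real.exp (a * x) := by
  have hax : (0:ℝ) ≤ a * x := mul_nonneg ha.le hx
  have hsx : 0 ≤ s * x := mul_nonneg hs hx
  rcases le_or_gt (s * x) 1 with h1 | h1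
  · have hb := Real.exp_bound' hsx h1 (n := 2) (by norm_num)
    have hb' : Real.exp (s * x) ≤ 1 + s * x + 3 / 4 * (s * x) ^ 2 := by
      simpa [Finset.sum_range_succ, Nat.factorial] using (by
        convert hb using 1; simp [Finset.sum_range_succ, Nat.factorial]; ring)
    have hx2 : x ^ 2 ≤ 4 / a ^ 2 * Real.exp (a * x) := by
      have := gw_sq_le_exp hax
      have ha2 : (0:ℝ) < a ^ 2 := by positivity
      rw [mul_pow] at this
      rw [div_mul_eq_mul_div, le_div_iff₀ ha2]
      nlinarith
    have hexp : (0:ℝ) ≤ Real.exp (a * x) := (Real.exp_pos _).le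
    have e2 := mul_le_mul_of_nonneg_left hx2 (sq_nonneg s)
    have e3 : 3 / 4 * (s * x) ^ 2 ≤ 3 / a ^ 2 * s ^ 2 * Real.exp (a * x) := by
      calc 3 / 4 * (s * x) ^ 2 = 3 / 4 * (s ^ 2 * x ^ 2) := by ring
        _ ≤ 3 / 4 * (s ^ 2 * (4 / a ^ 2 * Real.exp (a * x))) := by
            have := mul_le_mul_of_nonneg_left e2 (by norm_num : (0:ℝ) ≤ 3 / 4)
            linarith
        _ = 3 / a ^ 2 * s ^ 2 * Real.exp (a * x) := by ring
    have e4 : 3 / a ^ 2 * s ^ 2 * Real.exp (a * x) ≤ 16 / a ^ 2 * s ^ 2 * Real.exp (a * x) := by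
      have h13 : (0:ℝ) ≤ 13 / a ^ 2 * s ^ 2 * Real.exp (a * x) := by positivity
      linear_combination h13
    linarith [hb', e3, e4]
  · -- s * x > 1
    have hxpos : 0 < x := by
      rcases hx.lt_or_eq with h | h; · exact h
      · exfalso; rw [← h] at h1; simp at h1; linarith
    have hspos : 0 < s := by
      rcases hs.lt_or_eq with h | h; · exact h
      · exfalso; rw [← h] at h1; simp at h1; linarith
    have h2 : Real.exp (s * x) ≤ Real.exp (a / 2 * x) :=
      Real.exp_le_exp.2 (by nlinarith)
    have h3 : Real.exp (a / 2 * x) * Real.exp (a / 2 * x) = Real.exp (a * x) := by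
      rw [← Real.exp_add]; ring_nf
    -- exp(ax/2) ≥ a²x²/16
    have h4 : a ^ 2 * x ^ 2 / 16 ≤ Real.exp (a / 2 * x) := by
      have := gw_sq_le_exp (t := a / 2 * x) (by positivity)
      nlinarith
    have h5 : (1:ℝ) ≤ 16 / a ^ 2 * s ^ 2 * Real.exp (a / 2 * x) := by
      have ha2 : (0:ℝ) < a ^ 2 := by positivity
      have : a ^ 2 ≤ 16 * s ^ 2 * Real.exp (a / 2 * x) := by
        have hsx2 : 1 ≤ (s * x) ^ 2 := by nlinarith
        nlinarith [mul_le_mul_of_nonneg_left h4 (sq_nonneg s)]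
      rw [div_mul_eq_mul_div, div_mul_eq_mul_div, le_div_iff₀ ha2]
      linarith
    have hep : (0:ℝ) < Real.exp (a / 2 * x) := Real.exp_pos _
    calc Real.exp (s * x) ≤ Real.exp (a / 2 * x) := h2
      _ ≤ 16 / a ^ 2 * s ^ 2 * Real.exp (a / 2 * x) * Real.exp (a / 2 * x) := by
          nlinarith
      _ = 16 / a ^ 2 * s ^ 2 * Real.exp (a * x) := by rw [mul_assoc, h3]
      _ ≤ 1 + s * x + 16 / a ^ 2 * s ^ 2 * Real.exp (a * x) := by nlinarith

section aux
variable {Ω : Type*} [MeasureSpace Ω] [IsProbabilityMeasure (ℙ : Measure Ω)]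

-- MGF bound for the offspring variable
lemma gw_mgf_bound {X : Ω → ℕ} (hX : Measurable X) {a : ℝ} (ha : 0 < a)
    (hInt : Integrable (fun ω => Real.exp (a * (X ω : ℝ)))) {s : ℝ}
    (hs : 0 ≤ s) (hsa : s ≤ a / 2) :
    ∫⁻ ω, ENNReal.ofReal (Real.exp (s * (X ω : ℝ))) ≤
      ENNReal.ofReal (Real.exp ((∫ ω, (X ω : ℝ)) * s +
        (16 / a ^ 2 * ∫ ω, Real.exp (a * (X ω : ℝ))) * s ^ 2)) := by
  have hXR : Measurable fun ω => (X ω : ℝ) := measurable_from_top.comp hX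
  have hXInt : Integrable (fun ω => (X ω : ℝ)) := by
    refine (hInt.const_mul a⁻¹).mono' hXR.aestronglyMeasurable (ae_of_all _ fun ω => ?_)
    have h1 : a * (X ω : ℝ) + 1 ≤ Real.exp (a * (X ω : ℝ)) := Real.add_one_le_exp _
    have h2 : (0:ℝ) ≤ (X ω : ℝ) := Nat.cast_nonneg _
    rw [Real.norm_eq_abs, abs_of_nonneg h2]
    rw [inv_mul_eq_div, le_div_iff₀ ha, mul_comm]
    linarith
  have hg_int : Integrable (fun ω => 1 + s * (X ω : ℝ) +
      16 / a ^ 2 * s ^ 2 * Real.exp (a * (X ω : ℝ))) := by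
    exact ((integrable_const 1).add (hXInt.const_mul s)).add (hInt.const_mul _)
  calc ∫⁻ ω, ENNReal.ofReal (Real.exp (s * (X ω : ℝ)))
      ≤ ∫⁻ ω, ENNReal.ofReal (1 + s * (X ω : ℝ) +
          16 / a ^ 2 * s ^ 2 * Real.exp (a * (X ω : ℝ))) := by
        refine lintegral_mono fun ω => ENNReal.ofReal_le_ofReal ?_
        exact gw_exp_pointwise ha (Nat.cast_nonneg _) hs hsa
    _ = ENNReal.ofReal (∫ ω, (1 + s * (X ω : ℝ) +
          16 / a ^ 2 * s ^ 2 * Real.exp (a * (X ω : ℝ)))) := by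
        rw [ofReal_integral_eq_lintegral_ofReal hg_int]
        exact ae_of_all _ fun ω => by positivity
    _ ≤ ENNReal.ofReal (Real.exp ((∫ ω, (X ω : ℝ)) * s +
        (16 / a ^ 2 * ∫ ω, Real.exp (a * (X ω : ℝ))) * s ^ 2)) := by
        apply ENNReal.ofReal_le_ofReal
        have h1 : Integrable (fun _ : Ω => (1:ℝ)) := integrable_const 1
        have h2 : Integrable (fun ω => s * (X ω : ℝ)) := hXInt.const_mul s
        have h3 : Integrable (fun ω => 16 / a ^ 2 * s ^ 2 * Real.exp (a * (X ω : ℝ))) :=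
          hInt.const_mul _
        have h12 : Integrable (fun ω => 1 + s * (X ω : ℝ)) := h1.add h2
        rw [integral_add h12 h3, integral_add h1 h2, integral_const,
          MeasureTheory.integral_const_mul, MeasureTheory.integral_const_mul]
        have := Real.add_one_le_exp ((∫ ω, (X ω : ℝ)) * s +
          (16 / a ^ 2 * ∫ ω, Real.exp (a * (X ω : ℝ))) * s ^ 2)
        simp only [probReal_univ, smul_eq_mul, one_mul]
        nlinarith [this]

end aux

section gw
variable {Ω : Type*} [MeasureSpace Ω] [IsProbabilityMeasure (ℙ : Measure Ω)]
  {D : ℕ × ℕ → Ω → ℕ}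

/-- the σ-algebra generated by the variables with indices in `S` -/
noncomputable def gwSig (D : ℕ × ℕ → Ω → ℕ) (S : Set (ℕ × ℕ)) : MeasurableSpace Ω :=
  ⨆ p ∈ S, MeasurableSpace.comap (D p) inferInstance

lemma gwSig_le (hDmeas : ∀ p, Measurable (D p)) (S : Set (ℕ × ℕ)) :
    gwSig D S ≤ (inferInstance : MeasurableSpace Ω) :=
  iSup₂_le fun p _ => measurable_iff_comap_le.1 (hDmeas p)

lemma gw_D_meas {S : Set (ℕ × ℕ)} {p : ℕ × ℕ} (hp : p ∈ S) :
    Measurable[gwSig D S] (D p) :=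
  (measurable_iff_comap_le.2 le_rfl).mono
    (le_iSup₂ (f := fun p (_ : p ∈ S) => MeasurableSpace.comap (D p) inferInstance) p hp) le_rfl

lemma gw_indep (hDmeas : ∀ p, Measurable (D p))
    (hindep : iIndepFun D ℙ)
    {S T : Set (ℕ × ℕ)} (hST : Disjoint S T) :
    Indep (gwSig D S) (gwSig D T) ℙ :=
  indep_iSup_of_disjoint (fun p => measurable_iff_comap_le.1 (hDmeas p)) hindep hST

lemma gw_Z_meas (hDmeas : ∀ p, Measurable (D p)) {Z : ℕ → Ω → ℕ}
    (hZ0 : ∀ ω, Z 0 ω = 1)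
    (hZrec : ∀ k ω, Z (k + 1) ω = ∑ i ∈ Finset.range (Z k ω), D (k, i) ω) :
    ∀ k, Measurable[gwSig D {p : ℕ × ℕ | p.1 < k}] (Z k) := by
  intro k
  induction k with
  | zero =>
    have : Z 0 = fun _ => 1 := funext hZ0
    rw [this]; exact measurable_const
  | succ k ih =>
    have hmono : gwSig D {p : ℕ × ℕ | p.1 < k} ≤ gwSig D {p : ℕ × ℕ | p.1 < k + 1} := by
      apply iSup₂_le
      intro p hp
      exact le_iSup₂ (f := fun p (_ : p ∈ {p : ℕ × ℕ | p.1 < k + 1}) =>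
        MeasurableSpace.comap (D p) inferInstance) p (Nat.lt_succ_of_lt hp)
    refine @measurable_to_countable' ℕ Ω _ _ (gwSig D {p : ℕ × ℕ | p.1 < k + 1})
      (Z (k + 1)) fun m => ?_
    have : Z (k+1) ⁻¹' {m} =
        ⋃ n, (Z k ⁻¹' {n}) ∩ ((fun ω => ∑ i ∈ Finset.range n, D (k, i) ω) ⁻¹' {m}) := by
      ext ω
      simp only [Set.mem_preimage, Set.mem_singleton_iff, Set.mem_iUnion, Set.mem_inter_iff]
      constructor
      · intro h; exact ⟨Z k ω, rfl, by rw [← h, hZrec]⟩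
      · rintro ⟨n, h1, h2⟩; rw [hZrec, h1]; exact h2
    rw [this]
    apply MeasurableSet.iUnion
    intro n
    apply MeasurableSet.inter
    · exact hmono _ (ih (measurableSet_singleton n))
    · exact Finset.measurable_sum (f := fun i => D (k, i)) (Finset.range n)
        (fun i _ => gw_D_meas (show ((k, i) : ℕ × ℕ) ∈ {p : ℕ × ℕ | p.1 < k + 1}
          from Nat.lt_succ_self k)) (measurableSet_singleton m)

lemma gw_one (hDmeas : ∀ p, Measurable (D p))
    (hident : ∀ p, Measure.map (D p) ℙ = Measure.map (D (0, 0)) ℙ)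
    (F : ℕ → ℝ≥0∞) (p : ℕ × ℕ) :
    ∫⁻ ω, F (D p ω) = ∫⁻ ω, F (D (0, 0) ω) := by
  rw [← lintegral_map measurable_from_top (hDmeas p), hident p,
    lintegral_map measurable_from_top (hDmeas (0, 0))]

lemma gw_row (hDmeas : ∀ p, Measurable (D p))
    (hident : ∀ p, Measure.map (D p) ℙ = Measure.map (D (0, 0)) ℙ)
    (hindep : iIndepFun D ℙ)
    (F : ℕ → ℝ≥0∞) (k n : ℕ) :
    ∫⁻ ω, ∏ i ∈ Finset.range n, F (D (k, i) ω) = (∫⁻ ω, F (D (0, 0) ω)) ^ n := by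
  induction n with
  | zero => simp
  | succ n ih =>
    simp_rw [Finset.prod_range_succ]
    have hST : Disjoint {p : ℕ × ℕ | p.1 = k ∧ p.2 < n} ({(k, n)} : Set (ℕ × ℕ)) := by
      rw [Set.disjoint_left]
      rintro ⟨p1, p2⟩ ⟨h1, h2⟩ h3
      simp only [Set.mem_singleton_iff, Prod.mk.injEq] at h3
      omega
    have hmf : Measurable[gwSig D {p : ℕ × ℕ | p.1 = k ∧ p.2 < n}]
        fun ω => ∏ i ∈ Finset.range n, F (D (k, i) ω) := by
      refine Finset.measurable_prod (Finset.range n) fun i hi => ?_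
      exact measurable_from_top.comp
        (gw_D_meas ⟨rfl, Finset.mem_range.1 hi⟩)
    have hmg : Measurable[gwSig D ({(k, n)} : Set (ℕ × ℕ))] fun ω => F (D (k, n) ω) :=
      measurable_from_top.comp (gw_D_meas (Set.mem_singleton _))
    rw [lintegral_mul_eq_lintegral_mul_lintegral_of_independent_measurableSpace
      (gwSig_le hDmeas _) (gwSig_le hDmeas _) (gw_indep hDmeas hindep hST) hmf hmg,
      ih, gw_one hDmeas hident F (k, n), pow_succ]

lemma gw_part {X : Ω → ℕ} (hX : Measurable X) (f : Ω → ℝ≥0∞) :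
    ∫⁻ ω, f ω = ∑' n, ∫⁻ ω in X ⁻¹' {n}, f ω := by
  have hU : (⋃ n, X ⁻¹' {n}) = Set.univ := by
    ext ω; simp
  have hd : Pairwise (Function.onFun Disjoint fun n => X ⁻¹' {n}) := by
    intro m n hmn
    rw [Function.onFun, Set.disjoint_left]
    rintro ω h1 h2
    simp only [Set.mem_preimage, Set.mem_singleton_iff] at h1 h2
    exact hmn (h1.symm.trans h2)
  rw [← setLIntegral_univ, ← hU,
    lintegral_iUnion (fun n => hX (measurableSet_singleton n)) hd]

end gw

section key
variable {Ω : Type*} [MeasureSpace Ω] [IsProbabilityMeasure (ℙ : Measure Ω)]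
  {D : ℕ × ℕ → Ω → ℕ}

lemma gw_key (hDmeas : ∀ p, Measurable (D p))
    (hident : ∀ p, Measure.map (D p) ℙ = Measure.map (D (0, 0)) ℙ)
    (hindep : iIndepFun D ℙ)
    {Z : ℕ → Ω → ℕ} (hZ0 : ∀ ω, Z 0 ω = 1)
    (hZrec : ∀ k ω, Z (k + 1) ω = ∑ i ∈ Finset.range (Z k ω), D (k, i) ω)
    (k : ℕ) {s τ' : ℝ}
    (hΦ : ∫⁻ ω, ENNReal.ofReal (Real.exp (s * (D (0, 0) ω : ℝ))) ≤
      ENNReal.ofReal (Real.exp τ')) :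
    ∫⁻ ω, ENNReal.ofReal (Real.exp (s * (Z (k + 1) ω : ℝ))) ≤
      ∫⁻ ω, ENNReal.ofReal (Real.exp (τ' * (Z k ω : ℝ))) := by
  have hZk : Measurable (Z k) :=
    (gw_Z_meas hDmeas hZ0 hZrec k).mono (gwSig_le hDmeas _) le_rfl
  rw [gw_part hZk fun ω => ENNReal.ofReal (Real.exp (s * (Z (k + 1) ω : ℝ))),
    gw_part hZk fun ω => ENNReal.ofReal (Real.exp (τ' * (Z k ω : ℝ)))]
  refine ENNReal.tsum_le_tsum fun n => ?_
  have hset : MeasurableSet (Z k ⁻¹' {n}) := hZk (measurableSet_singleton n)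
  -- left side on the set
  have hL : ∫⁻ ω in Z k ⁻¹' {n}, ENNReal.ofReal (Real.exp (s * (Z (k + 1) ω : ℝ))) =
      ℙ (Z k ⁻¹' {n}) *
        (∫⁻ ω, ENNReal.ofReal (Real.exp (s * (D (0, 0) ω : ℝ)))) ^ n := by
    have h1 : ∫⁻ ω in Z k ⁻¹' {n}, ENNReal.ofReal (Real.exp (s * (Z (k + 1) ω : ℝ))) =
        ∫⁻ ω in Z k ⁻¹' {n},
          ∏ i ∈ Finset.range n, ENNReal.ofReal (Real.exp (s * (D (k, i) ω : ℝ))) := by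
      refine setLIntegral_congr_fun hset (fun ω hω => ?_)
      have hωn : Z k ω = n := hω
      rw [hZrec k ω, hωn]
      rw [← ENNReal.ofReal_prod_of_nonneg (fun i _ => (Real.exp_pos _).le),
        ← Real.exp_sum]
      congr 2
      rw [← Finset.mul_sum]
      congr 1
      push_cast
      rfl
    rw [h1, ← lintegral_indicator hset]
    have h2 : (Z k ⁻¹' {n}).indicator
          (fun ω => ∏ i ∈ Finset.range n, ENNReal.ofReal (Real.exp (s * (D (k, i) ω : ℝ)))) =
        fun ω => (Z k ⁻¹' {n}).indicator (1 : Ω → ℝ≥0∞) ω *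
          ∏ i ∈ Finset.range n, ENNReal.ofReal (Real.exp (s * (D (k, i) ω : ℝ))) := by
      funext ω
      by_cases hω : ω ∈ Z k ⁻¹' {n} <;>
        simp [hω, Set.indicator_of_mem, Set.indicator_of_notMem]
    rw [h2]
    have hmf : Measurable[gwSig D {p : ℕ × ℕ | p.1 < k}]
        ((Z k ⁻¹' {n}).indicator (1 : Ω → ℝ≥0∞)) :=
      measurable_const.indicator ((gw_Z_meas hDmeas hZ0 hZrec k) (measurableSet_singleton n))
    have hmg : Measurable[gwSig D {p : ℕ × ℕ | p.1 = k}]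
        fun ω => ∏ i ∈ Finset.range n, ENNReal.ofReal (Real.exp (s * (D (k, i) ω : ℝ))) := by
      refine Finset.measurable_prod (Finset.range n) fun i _ => ?_
      exact Measurable.comp (g := fun x : ℕ => ENNReal.ofReal (Real.exp (s * (x : ℝ))))
        (f := D (k, i)) measurable_from_top
        (gw_D_meas (show ((k, i) : ℕ × ℕ) ∈ {p : ℕ × ℕ | p.1 = k} from rfl))
    have hST : Disjoint {p : ℕ × ℕ | p.1 < k} {p : ℕ × ℕ | p.1 = k} := by
      rw [Set.disjoint_left]; rintro p h1 h2
      simp only [Set.mem_setOf_eq] at h1 h2; omega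
    rw [lintegral_mul_eq_lintegral_mul_lintegral_of_independent_measurableSpace
      (gwSig_le hDmeas _) (gwSig_le hDmeas _) (gw_indep hDmeas hindep hST) hmf hmg,
      gw_row hDmeas hident hindep (fun x => ENNReal.ofReal (Real.exp (s * (x : ℝ)))) k n,
      lintegral_indicator_one hset]
  -- right side on the set
  have hR : ∫⁻ ω in Z k ⁻¹' {n}, ENNReal.ofReal (Real.exp (τ' * (Z k ω : ℝ))) =
      ℙ (Z k ⁻¹' {n}) * ENNReal.ofReal (Real.exp τ') ^ n := by
    have h1 : ∫⁻ ω in Z k ⁻¹' {n}, ENNReal.ofReal (Real.exp (τ' * (Z k ω : ℝ))) =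
        ∫⁻ _ω in Z k ⁻¹' {n}, ENNReal.ofReal (Real.exp τ') ^ n := by
      refine setLIntegral_congr_fun hset (fun ω hω => ?_)
      have hωn : Z k ω = n := hω
      rw [hωn, ← ENNReal.ofReal_pow (Real.exp_pos _).le, ← Real.exp_nat_mul, mul_comm]
    rw [h1, setLIntegral_const, mul_comm]
  rw [hL, hR]
  exact mul_le_mul_right (pow_le_pow_left' hΦ n) _

end key

lemma gw_iter {μ b astar : ℝ} (hμ : 1 < μ) (hb : 0 ≤ b)
    (h1 : 4 * b * astar ≤ μ * (μ - 1)) (ha0 : 0 < astar) (n : ℕ) :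
    ∀ j, j ≤ n → 0 ≤ (fun s => μ * s + b * s ^ 2)^[j] (astar / μ ^ n) ∧
      (fun s => μ * s + b * s ^ 2)^[j] (astar / μ ^ n) ≤
        astar * (μ ^ j / μ ^ n) * (1 + μ ^ j / μ ^ n) := by
  have hμ0 : (0:ℝ) < μ := by linarith
  intro j
  induction j with
  | zero =>
    intro _
    have hμn : (0:ℝ) < μ ^ n := pow_pos hμ0 n
    constructor
    · simp only [Function.iterate_zero, id_eq]; positivity
    · simp only [Function.iterate_zero, id_eq, pow_zero]
      have e : astar * (1 / μ ^ n) * (1 + 1 / μ ^ n) =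
          astar / μ ^ n + astar * (1 / μ ^ n) ^ 2 := by ring
      rw [e]
      have h3 : (0:ℝ) ≤ astar * (1 / μ ^ n) ^ 2 := by positivity
      linarith
  | succ j ih =>
    intro hjn
    obtain ⟨ht0, ht⟩ := ih (Nat.le_of_succ_le hjn)
    set t := (fun s => μ * s + b * s ^ 2)^[j] (astar / μ ^ n) with htdef
    rw [Function.iterate_succ_apply', ← htdef]
    set q := μ ^ j / μ ^ n with hq
    have hq0 : 0 < q := by positivity
    have hq1 : q ≤ 1 := by
      rw [hq, div_le_one (pow_pos hμ0 n)]
      exact pow_le_pow_right₀ hμ.le (Nat.le_of_succ_le hjn)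
    have hqq : μ ^ (j + 1) / μ ^ n = μ * q := by
      rw [hq, pow_succ]; ring
    have ht2 : t ≤ 2 * astar * q := by nlinarith
    constructor
    · show 0 ≤ μ * t + b * t ^ 2
      exact add_nonneg (mul_nonneg hμ0.le ht0) (mul_nonneg hb (sq_nonneg t))
    · rw [hqq]
      show μ * t + b * t ^ 2 ≤ astar * (μ * q) * (1 + μ * q)
      have ht4 : t ^ 2 ≤ 4 * astar ^ 2 * q ^ 2 := by
        nlinarith [mul_le_mul ht2 ht2 ht0 (by positivity : (0:ℝ) ≤ 2 * astar * q)]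
      have hbt : b * t ^ 2 ≤ 4 * b * astar ^ 2 * q ^ 2 :=
        by nlinarith [mul_le_mul_of_nonneg_left ht4 hb]
      have hpoly : 0 ≤ μ ^ 2 - μ - 4 * b * astar := by nlinarith
      have hkey : 0 ≤ astar * q ^ 2 * (μ ^ 2 - μ - 4 * b * astar) :=
        mul_nonneg (mul_nonneg ha0.le (sq_nonneg q)) hpoly
      nlinarith [mul_le_mul_of_nonneg_left ht hμ0.le]


/-- for a Galton–Watson process `Z_{k+1} = Σ_{i<Z_k} D_{k,i}` with i.i.d.
offspring `D` of mean `μ > 1`, finite exponential moment `E[e^{aD}] < ∞` for some `a > 0`,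
`Z_0 = 1`, and a.s. limit `W` of the normalized martingale `W_k = μ^{−k} Z_k`, there exists
`a_* > 0` such that `E[e^{a_* W}] < ∞`. -/
theorem gw_limit_exponential_moment {Ω : Type*} [MeasureSpace Ω]
    [IsProbabilityMeasure (ℙ : Measure Ω)]
    (D : ℕ × ℕ → Ω → ℕ) (hDmeas : ∀ p, Measurable (D p))
    (hident : ∀ p, Measure.map (D p) ℙ = Measure.map (D (0, 0)) ℙ)
    (hindep : iIndepFun D ℙ)
    (μ : ℝ) (hμdef : μ = ∫ ω, (D (0, 0) ω : ℝ)) (hμ1 : 1 < μ)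
    (ha : ∃ a > 0, Integrable (fun ω => Real.exp (a * (D (0, 0) ω : ℝ))))
    (Z : ℕ → Ω → ℕ) (hZ0 : ∀ ω, Z 0 ω = 1)
    (hZrec : ∀ k ω, Z (k + 1) ω = ∑ i ∈ Finset.range (Z k ω), D (k, i) ω)
    (W : Ω → ℝ) (hWmeas : Measurable W)
    (hW : ∀ᵐ ω, Tendsto (fun k : ℕ => (μ ^ k)⁻¹ * (Z k ω : ℝ)) atTop (nhds (W ω))) :
    ∃ astar > 0, Integrable (fun ω => Real.exp (astar * W ω)) := by
  obtain ⟨a, hapos, haInt⟩ := ha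
  have hμ0 : (0:ℝ) < μ := by linarith
  set M : ℝ := ∫ ω, Real.exp (a * (D (0, 0) ω : ℝ)) with hM
  have hM0 : 0 ≤ M := integral_nonneg fun ω => (Real.exp_pos _).le
  set b : ℝ := 16 / a ^ 2 * M with hbdef
  have hb : 0 ≤ b := by positivity
  set astar : ℝ := min (a / 4) (μ * (μ - 1) / (4 * (b + 1))) with hastar
  have ha0 : 0 < astar := by
    refine lt_min (by positivity) ?_
    have h1 : (0:ℝ) < μ * (μ - 1) := mul_pos hμ0 (by linarith)
    positivity
  have h4b : 4 * b * astar ≤ μ * (μ - 1) := by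
    have h1 : astar ≤ μ * (μ - 1) / (4 * (b + 1)) := min_le_right _ _
    have h2 : 4 * (b + 1) * (μ * (μ - 1) / (4 * (b + 1))) = μ * (μ - 1) := by
      field_simp
    nlinarith
  have haq : astar ≤ a / 4 := min_le_left _ _
  set τf : ℝ → ℝ := fun s => μ * s + b * s ^ 2 with hτf
  -- the uniform bound on the exponential moments of W_n
  have hbound : ∀ n, ∫⁻ ω, ENNReal.ofReal (Real.exp (astar / μ ^ n * (Z n ω : ℝ))) ≤
      ENNReal.ofReal (Real.exp (2 * astar)) := by
    intro n
    have hchain : ∀ j, j ≤ n →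
        ∫⁻ ω, ENNReal.ofReal (Real.exp (astar / μ ^ n * (Z n ω : ℝ))) ≤
        ∫⁻ ω, ENNReal.ofReal (Real.exp (τf^[j] (astar / μ ^ n) * (Z (n - j) ω : ℝ))) := by
      intro j
      induction j with
      | zero => intro _; simp
      | succ j ih =>
        intro hj
        refine (ih (Nat.le_of_succ_le hj)).trans ?_
        obtain ⟨ht0, ht⟩ := gw_iter hμ1 hb h4b ha0 n j (Nat.le_of_succ_le hj)
        set t := τf^[j] (astar / μ ^ n) with htdef
        have hjlt : j < n := hj
        have hq1 : μ ^ j / μ ^ n ≤ 1 := by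
          rw [div_le_one (pow_pos hμ0 n)]
          exact pow_le_pow_right₀ hμ1.le hjlt.le
        have hq0 : 0 < μ ^ j / μ ^ n := by positivity
        have ht2a : t ≤ 2 * astar := by
          nlinarith [mul_nonneg ha0.le (mul_nonneg (sub_nonneg.2 hq1)
            (show (0:ℝ) ≤ 2 + μ ^ j / μ ^ n by linarith))]
        have hsa : t ≤ a / 2 := by linarith
        have hΦ := gw_mgf_bound (hDmeas (0, 0)) hapos haInt ht0 hsa
        rw [← hμdef, ← hM, ← hbdef] at hΦ
        have hΦ' : ∫⁻ ω, ENNReal.ofReal (Real.exp (t * (D (0, 0) ω : ℝ))) ≤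
            ENNReal.ofReal (Real.exp (τf t)) := hΦ
        have e : n - j = (n - (j + 1)) + 1 := by omega
        rw [e]
        have hkey := gw_key hDmeas hident hindep hZ0 hZrec (n - (j + 1)) hΦ'
        rw [Function.iterate_succ_apply', ← htdef]
        exact hkey
    have hfin := hchain n le_rfl
    have e0 : ∀ ω, (Z (n - n) ω : ℝ) = 1 := by
      intro ω; rw [Nat.sub_self, hZ0]; norm_num
    simp only [e0, mul_one] at hfin
    rw [lintegral_const] at hfin
    simp only [measure_univ, mul_one] at hfin
    refine hfin.trans (ENNReal.ofReal_le_ofReal (Real.exp_le_exp.2 ?_))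
    obtain ⟨_, htn⟩ := gw_iter hμ1 hb h4b ha0 n n le_rfl
    have hqn : μ ^ n / μ ^ n = 1 := div_self (pow_pos hμ0 n).ne'
    rw [hqn] at htn
    linarith
  -- Fatou's lemma
  refine ⟨astar, ha0, ?_⟩
  have hZnm : ∀ n, Measurable fun ω => (Z n ω : ℝ) := fun n =>
    measurable_from_top.comp ((gw_Z_meas hDmeas hZ0 hZrec n).mono (gwSig_le hDmeas _) le_rfl)
  have hfin : ∫⁻ ω, ENNReal.ofReal (Real.exp (astar * W ω)) ≤
      ENNReal.ofReal (Real.exp (2 * astar)) := by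
    have hae : ∀ᵐ ω, ENNReal.ofReal (Real.exp (astar * W ω)) =
        Filter.liminf (fun n => ENNReal.ofReal
          (Real.exp (astar * ((μ ^ n)⁻¹ * (Z n ω : ℝ))))) atTop := by
      refine hW.mono fun ω hω => ?_
      have h1 : Tendsto (fun n => ENNReal.ofReal (Real.exp (astar * ((μ ^ n)⁻¹ * (Z n ω : ℝ)))))
          atTop (nhds (ENNReal.ofReal (Real.exp (astar * W ω)))) :=
        (ENNReal.continuous_ofReal.tendsto _).comp
          ((Real.continuous_exp.tendsto _).comp (hω.const_mul astar))
      exact h1.liminf_eq.symm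
    calc ∫⁻ ω, ENNReal.ofReal (Real.exp (astar * W ω))
        = ∫⁻ ω, Filter.liminf (fun n => ENNReal.ofReal
            (Real.exp (astar * ((μ ^ n)⁻¹ * (Z n ω : ℝ))))) atTop := lintegral_congr_ae hae
      _ ≤ Filter.liminf (fun n => ∫⁻ ω, ENNReal.ofReal
            (Real.exp (astar * ((μ ^ n)⁻¹ * (Z n ω : ℝ))))) atTop := by
          refine lintegral_liminf_le fun n => ?_
          exact ENNReal.measurable_ofReal.comp
            (Real.measurable_exp.comp (((hZnm n).const_mul _).const_mul _))
      _ ≤ ENNReal.ofReal (Real.exp (2 * astar)) := by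
          have hstep : ∀ n, (∫⁻ ω, ENNReal.ofReal
              (Real.exp (astar * ((μ ^ n)⁻¹ * (Z n ω : ℝ))))) ≤
              ENNReal.ofReal (Real.exp (2 * astar)) := by
            intro n
            have e : ∀ z : ℝ, astar * ((μ ^ n)⁻¹ * z) = astar / μ ^ n * z := by
              intro z; rw [div_eq_mul_inv]; ring
            simp_rw [e]
            exact hbound n
          refine le_trans (Filter.liminf_le_liminf (Filter.Eventually.of_forall hstep)) ?_
          simp [Filter.liminf_const]
  refine ⟨(Real.measurable_exp.comp (hWmeas.const_mul astar)).aestronglyMeasurable, ?_⟩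
  rw [hasFiniteIntegral_iff_ofReal (ae_of_all _ fun ω => (Real.exp_pos _).le)]
  exact lt_of_le_of_lt hfin ENNReal.ofReal_lt_top
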